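/- Let $p \geq 2$ and let $v_1, v_2 \in \mathbb{R}^n$. Then there exist constants $C_p > 0$ and $\delta_0 > 0$, depending only on $p$, such that for all $0 < \delta \leq \delta_0$, $\int_0^1 \int_0^1 |v_1 - (t - s\delta) v_2|^{p-2} \, ds \, dt \geq C_p (\max\{|v_1|, |v_2|\})^{p-2}$. -/
import Mathlib

open MeasureTheory intervalIntegral

/-- Lemma 3.2: lower bound for the double integral `J`. -/
theorem stmt_0 (n : ℕ) (p : ℝ) (hp : 2 ≤ p) :
    ∃ C δ₀ : ℝ, 0 < C ∧ 0 < δ₀ ∧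
      ∀ (v₁ v₂ : EuclideanSpace ℝ (Fin n)) (δ : ℝ), 0 < δ → δ ≤ δ₀ →
        C * (max ‖v₁‖ ‖v₂‖) ^ (p - 2) ≤
          ∫ t in (0:ℝ)..1, ∫ s in (0:ℝ)..1, ‖v₁ - (t - s * δ) • v₂‖ ^ (p - 2) := by
  set q := p - 2 with hqdef
  have hq : (0:ℝ) ≤ q := by simp only [hqdef]; linarith
  refine ⟨(3/16) ^ q / 4, 1/8, by positivity, by norm_num, ?_⟩
  intro v₁ v₂ δ hδ hδ0
  set M := max ‖v₁‖ ‖v₂‖ with hM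
  have hM0 : 0 ≤ M := le_trans (norm_nonneg _) (le_max_left _ _)
  set f : ℝ → ℝ := fun r => ‖v₁ - r • v₂‖ with hf
  -- key two-point inequality
  have key : ∀ r₁ r₂ : ℝ, -(1/8) ≤ r₁ → r₁ ≤ 1/4 → 5/8 ≤ r₂ → r₂ ≤ 1 →
      3/16 * M ≤ max (f r₁) (f r₂) := by
    intro r₁ r₂ h1 h2 h3 h4
    set K := max (f r₁) (f r₂) with hK
    have ha : f r₁ ≤ K := le_max_left _ _
    have hb : f r₂ ≤ K := le_max_right _ _
    have hK0 : 0 ≤ K := le_trans (norm_nonneg _) ha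
    have e2 : (r₂ - r₁) • v₂ = (v₁ - r₁ • v₂) - (v₁ - r₂ • v₂) := by module
    have hv2 : (r₂ - r₁) * ‖v₂‖ ≤ 2 * K := by
      calc (r₂ - r₁) * ‖v₂‖ = ‖(r₂ - r₁) • v₂‖ := by
            rw [norm_smul, Real.norm_eq_abs, abs_of_nonneg (by linarith)]
        _ = ‖(v₁ - r₁ • v₂) - (v₁ - r₂ • v₂)‖ := by rw [e2]
        _ ≤ f r₁ + f r₂ := norm_sub_le _ _
        _ ≤ 2 * K := by linarith
    have e1 : (r₂ - r₁) • v₁ = r₂ • (v₁ - r₁ • v₂) - r₁ • (v₁ - r₂ • v₂) := by module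
    have hv1 : (r₂ - r₁) * ‖v₁‖ ≤ (5/4) * K := by
      calc (r₂ - r₁) * ‖v₁‖ = ‖(r₂ - r₁) • v₁‖ := by
            rw [norm_smul, Real.norm_eq_abs, abs_of_nonneg (by linarith)]
        _ = ‖r₂ • (v₁ - r₁ • v₂) - r₁ • (v₁ - r₂ • v₂)‖ := by rw [e1]
        _ ≤ ‖r₂ • (v₁ - r₁ • v₂)‖ + ‖r₁ • (v₁ - r₂ • v₂)‖ := norm_sub_le _ _
        _ = |r₂| * f r₁ + |r₁| * f r₂ := by rw [norm_smul, norm_smul, Real.norm_eq_abs, Real.norm_eq_abs]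
        _ ≤ 1 * K + (1/4) * K := by
            have hr₂ : |r₂| ≤ 1 := abs_le.mpr ⟨by linarith, h4⟩
            have hr₁ : |r₁| ≤ 1/4 := abs_le.mpr ⟨by linarith, h2⟩
            have := norm_nonneg (v₁ - r₁ • v₂)
            have := norm_nonneg (v₁ - r₂ • v₂)
            have h1' : |r₂| * f r₁ ≤ 1 * K := by
              apply mul_le_mul hr₂ ha (norm_nonneg _) (by norm_num)
            have h2' : |r₁| * f r₂ ≤ (1/4) * K := by
              apply mul_le_mul hr₁ hb (norm_nonneg _) (by norm_num)
            linarith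
        _ = (5/4) * K := by ring
    have hgap : (3:ℝ)/8 ≤ r₂ - r₁ := by linarith
    have hn1 : (0:ℝ) ≤ ‖v₁‖ := norm_nonneg _
    have hn2 : (0:ℝ) ≤ ‖v₂‖ := norm_nonneg _
    have b1 : (3/8) * ‖v₁‖ ≤ (5/4) * K := le_trans (by nlinarith) hv1
    have b2 : (3/8) * ‖v₂‖ ≤ 2 * K := le_trans (by nlinarith) hv2
    rcases max_cases ‖v₁‖ ‖v₂‖ with ⟨hEq, _⟩ | ⟨hEq, _⟩ <;> rw [hM, hEq] <;> linarith
  -- continuity of the integrand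
  have hcont : Continuous fun ts : ℝ × ℝ => ‖v₁ - (ts.1 - ts.2 * δ) • v₂‖ ^ q := by
    apply (Real.continuous_rpow_const hq).comp
    exact (continuous_const.sub (((continuous_fst.sub (continuous_snd.mul continuous_const))).smul continuous_const)).norm
  set F : ℝ → ℝ := fun t => ∫ s in (0:ℝ)..1, ‖v₁ - (t - s * δ) • v₂‖ ^ q with hF
  have hFcont : Continuous F := by
    apply intervalIntegral.continuous_parametric_intervalIntegral_of_continuous'
      (f := fun t s => ‖v₁ - (t - s * δ) • v₂‖ ^ q)
    exact hcont
  have hFnonneg : ∀ t : ℝ, 0 ≤ F t := by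
    intro t
    apply intervalIntegral.integral_nonneg (by norm_num)
    intro s _
    positivity
  -- choose the good subinterval
  have hchoice : ∃ a b : ℝ, 0 ≤ a ∧ a ≤ b ∧ b ≤ 1 ∧ b - a = 1/4 ∧
      ∀ t ∈ Set.Icc a b, ∀ s ∈ Set.Icc (0:ℝ) 1, 3/16 * M ≤ f (t - s * δ) := by
    by_cases hP : ∀ r ∈ Set.Icc (5/8 : ℝ) 1, 3/16 * M ≤ f r
    · refine ⟨3/4, 1, by norm_num, by norm_num, le_refl _, by norm_num, ?_⟩
      intro t ht s hs
      apply hP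
      constructor
      · nlinarith [ht.1, hs.2, hδ.le]
      · nlinarith [ht.2, hs.1, hδ.le]
    · push_neg at hP
      obtain ⟨r₂, hr₂, hr₂lt⟩ := hP
      refine ⟨0, 1/4, le_refl _, by norm_num, by norm_num, by norm_num, ?_⟩
      intro t ht s hs
      have hr₁a : -(1/8) ≤ t - s * δ := by nlinarith [ht.1, hs.2, hδ.le]
      have hr₁b : t - s * δ ≤ 1/4 := by nlinarith [ht.2, hs.1, hδ.le]
      have := key (t - s * δ) r₂ hr₁a hr₁b hr₂.1 hr₂.2
      rcases max_cases (f (t - s * δ)) (f r₂) with ⟨hEq, _⟩ | ⟨hEq, _⟩ <;>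
        rw [hEq] at this <;> linarith
  obtain ⟨a, b, ha0, hab, hb1, hlen, hbd⟩ := hchoice
  set c : ℝ := 3/16 * M with hc
  have hc0 : 0 ≤ c := by positivity
  -- inner bound: F t ≥ c ^ q on [a, b]
  have hinner : ∀ t ∈ Set.Icc a b, c ^ q ≤ F t := by
    intro t ht
    have : ∫ s in (0:ℝ)..1, c ^ q ≤ F t := by
      apply intervalIntegral.integral_mono_on (by norm_num)
      · exact intervalIntegrable_const
      · exact (hcont.comp (Continuous.prodMk_right t)).intervalIntegrable _ _
      · intro s hs
        exact Real.rpow_le_rpow hc0 (hbd t ht s hs) hq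
    simpa using this
  -- outer bound
  have houter : (1/4) * c ^ q ≤ ∫ t in a..b, F t := by
    have : ∫ t in a..b, c ^ q ≤ ∫ t in a..b, F t := by
      apply intervalIntegral.integral_mono_on hab intervalIntegrable_const
        (hFcont.intervalIntegrable _ _) hinner
    rw [intervalIntegral.integral_const, smul_eq_mul, hlen] at this
    linarith
  have hsub : ∫ t in a..b, F t ≤ ∫ t in (0:ℝ)..1, F t := by
    apply intervalIntegral.integral_mono_interval ha0 hab hb1
    · exact Filter.Eventually.of_forall fun t => hFnonneg t
    · exact hFcont.intervalIntegrable _ _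
  have hrw : (3/16) ^ q / 4 * M ^ q = (1/4) * c ^ q := by
    rw [hc, Real.mul_rpow (by norm_num) hM0]; ring
  calc (3/16) ^ q / 4 * M ^ q = (1/4) * c ^ q := hrw
    _ ≤ ∫ t in a..b, F t := houter
    _ ≤ ∫ t in (0:ℝ)..1, F t := hsub
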